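/- Under the same setting (λ a complete characteristic map on wed_v(K) with {λ(v₁),λ(v₂)} unimodular), λ is non-singular if and only if both projections proj_{v₁}λ and proj_{v₂}λ are non-singular. -/

import Mathlib

variable {V : Type*}

/-- An (abstract) simplicial complex on the vertex set `V`: a collection of finite
subsets of `V` closed under taking subsets. -/
def IsComplex (K : Set (Finset V)) : Prop :=
  ∀ σ ∈ K, ∀ τ ⊆ σ, τ ∈ K

/-- The link of a vertex `v` in `K`. -/
def linkOf [DecidableEq V] (K : Set (Finset V)) (v : V) : Set (Finset V) :=
  {σ | v ∉ σ ∧ insert v σ ∈ K}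

/-- The deletion `K \ {v}`: the induced subcomplex on the vertices other than `v`. -/
def delOf (K : Set (Finset V)) (v : V) : Set (Finset V) :=
  {σ | σ ∈ K ∧ v ∉ σ}

/-- The simplicial wedge `wed_v(K) = (I ⋆ link_K{v}) ∪ (∂I ⋆ (K \ {v}))` of `K` at the
vertex `v`.  Its vertex set is `V ⊕ Unit`, where `v₁ = Sum.inl v` and `v₂ = Sum.inr ()`
are the two vertices of the edge `I`. -/
def wedgeAt [DecidableEq V] (K : Set (Finset V)) (v : V) : Set (Finset (V ⊕ Unit)) :=
  {τ | ∃ (s : Finset (V ⊕ Unit)) (σ : Finset V),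
    s ⊆ {Sum.inl v, Sum.inr ()} ∧ τ = s ∪ σ.image Sum.inl ∧
    (σ ∈ linkOf K v ∨ (s ≠ {Sum.inl v, Sum.inr ()} ∧ σ ∈ delOf K v))}

/-- The geometric realization of a simplicial complex on a finite vertex set `V`,
realized inside `V → ℝ` as convex combinations supported on faces. -/
def realization [Fintype V] (K : Set (Finset V)) : Set (V → ℝ) :=
  {f | (∀ w, 0 ≤ f w) ∧ (∑ w, f w) = 1 ∧ ∃ σ ∈ K, ∀ w, w ∉ σ → f w = 0}

/-- A subset `S` of `ℝⁿ` is star-shaped in `p` if every ray emanating from `p`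
intersects `S` once and only once. -/
def StarShapedIn {n : ℕ} (S : Set (EuclideanSpace ℝ (Fin n)))
    (p : EuclideanSpace ℝ (Fin n)) : Prop :=
  ∀ u : EuclideanSpace ℝ (Fin n), u ≠ 0 → ∃! t : ℝ, 0 ≤ t ∧ p + t • u ∈ S

/-- `K` is a fan-like simplicial sphere of dimension `n − 1`: its geometric realization
embeds into `ℝⁿ` as a star-shaped set (equivalently, there is a complete fan over `K`). -/
def FanLike [Fintype V] (K : Set (Finset V)) (n : ℕ) : Prop :=
  ∃ (S : Set (EuclideanSpace ℝ (Fin n))) (p : EuclideanSpace ℝ (Fin n)),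
    Nonempty (realization K ≃ₜ S) ∧ StarShapedIn S p

/-- A subset of a `ℤ`-module is unimodular if it is part of a `ℤ`-basis. -/
def IsUnimodularSet {M : Type*} [AddCommGroup M] [Module ℤ M] (s : Set M) : Prop :=
  ∃ (ι : Type) (b : Module.Basis ι ℤ M), s ⊆ Set.range b

/-- `(K, lam)` is a characteristic map over `ℤ`: the vectors assigned to the vertices of
each face of `K` are linearly independent over `ℝ`. -/
def IsCharMapInt {W : Type*} {N : ℕ} (K : Set (Finset W)) (lam : W → (Fin N → ℤ)) :
    Prop :=
  ∀ σ ∈ K, LinearIndependent ℝ (fun w : σ => fun j => ((lam w.1 j : ℝ)))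

/-- `(K, lam)` is non-singular: for every face of `K` the assigned vectors positively
span a non-singular cone, i.e. they form a unimodular set. -/
def NonSingularInt {W : Type*} {N : ℕ} (K : Set (Finset W)) (lam : W → (Fin N → ℤ)) :
    Prop :=
  ∀ σ ∈ K, IsUnimodularSet (lam '' ↑σ)

lemma IsUnimodularSet.subset' {M : Type*} [AddCommGroup M] [Module ℤ M] {s t : Set M}
    (h : IsUnimodularSet t) (hst : s ⊆ t) : IsUnimodularSet s := by
  obtain ⟨ι, b, hb⟩ := h; exact ⟨ι, b, hst.trans hb⟩

section Abstract

variable {M Q : Type*} [AddCommGroup M] [Module ℤ M] [AddCommGroup Q] [Module ℤ Q]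
  (π : M →ₗ[ℤ] Q)

/-- The basis of the image of a surjection killing exactly one basis vector. -/
noncomputable def quotBasisAux {ι : Type} (b : Module.Basis ι ℤ M) (i₀ : ι)
    (hsurj : Function.Surjective π) (hker : LinearMap.ker π = Submodule.span ℤ {b i₀}) :
    Module.Basis {i : ι // i ≠ i₀} ℤ Q :=
  Module.Basis.mk (v := fun i => π (b i.1))
    (by
      have hli : LinearIndependent ℤ (fun i : {i : ι // i ≠ i₀} => b i.1) :=
        b.linearIndependent.comp _ Subtype.val_injective
      have hrange : Set.range (fun i : {i : ι // i ≠ i₀} => b i.1) = b '' {i₀}ᶜ := by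
        ext y; constructor
        · rintro ⟨i, rfl⟩; exact ⟨i.1, i.2, rfl⟩
        · rintro ⟨i, hi, rfl⟩; exact ⟨⟨i, hi⟩, rfl⟩
      have hdisj : Disjoint (Submodule.span ℤ
          (Set.range fun i : {i : ι // i ≠ i₀} => b i.1)) (LinearMap.ker π) := by
        rw [hker, hrange, show ({b i₀} : Set M) = b '' {i₀} by simp]
        exact b.linearIndependent.disjoint_span_image disjoint_compl_left
      exact hli.map hdisj)
    (by
      intro m _
      obtain ⟨m', rfl⟩ := hsurj m
      have hm' : m' ∈ Submodule.span ℤ (Set.range b) := by rw [b.span_eq]; trivial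
      have hmap := Submodule.mem_map_of_mem (f := π) hm'
      rw [Submodule.map_span] at hmap
      refine Submodule.span_le.mpr ?_ hmap
      rintro y ⟨-, ⟨i, rfl⟩, rfl⟩
      by_cases hi : i = i₀
      · subst hi
        have h0 : π (b i) = 0 := by
          rw [← LinearMap.mem_ker, hker]
          exact Submodule.mem_span_singleton_self _
        rw [h0]; exact Submodule.zero_mem _
      · exact Submodule.subset_span ⟨⟨i, hi⟩, rfl⟩)

lemma quotBasisAux_apply {ι : Type} (b : Module.Basis ι ℤ M) (i₀ : ι)
    (hsurj : Function.Surjective π) (hker : LinearMap.ker π = Submodule.span ℤ {b i₀})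
    (i : {i : ι // i ≠ i₀}) :
    quotBasisAux π b i₀ hsurj hker i = π (b i.1) := by
  rw [quotBasisAux, Module.Basis.mk_apply]

lemma unimod_proj {x : M} {s : Set M}
    (hsurj : Function.Surjective π) (hker : LinearMap.ker π = Submodule.span ℤ {x})
    (h : IsUnimodularSet (insert x s)) (hxs : x ∉ s) :
    IsUnimodularSet (π '' s) := by
  obtain ⟨ι, b, hb⟩ := h
  obtain ⟨i₀, hi₀⟩ : x ∈ Set.range b := hb (Set.mem_insert _ _)
  subst hi₀
  refine ⟨{i : ι // i ≠ i₀}, quotBasisAux π b i₀ hsurj hker, ?_⟩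
  rintro - ⟨y, hy, rfl⟩
  obtain ⟨i, rfl⟩ : y ∈ Set.range b := hb (Set.mem_insert_of_mem _ hy)
  have hi : i ≠ i₀ := fun h => hxs (h ▸ hy)
  exact ⟨⟨i, hi⟩, quotBasisAux_apply π b i₀ hsurj hker ⟨i, hi⟩⟩

lemma unimod_insert {x : M}
    (hfree : LinearMap.ker (LinearMap.toSpanSingleton ℤ M x) = ⊥) {s : Set M}
    (hsurj : Function.Surjective π) (hker : LinearMap.ker π = Submodule.span ℤ {x})
    (h : IsUnimodularSet (π '' s)) (hinj : Set.InjOn π s) :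
    IsUnimodularSet (insert x s) := by
  obtain ⟨ι, c, hc⟩ := h
  have hg : ∀ j : ι, ∃ y : M, π y = c j ∧ (c j ∈ π '' s → y ∈ s) := by
    intro j
    by_cases hj : c j ∈ π '' s
    · obtain ⟨y, hy, hy2⟩ := hj; exact ⟨y, hy2, fun _ => hy⟩
    · obtain ⟨y, hy⟩ := hsurj (c j)
      exact ⟨y, hy, fun h' => absurd h' hj⟩
  choose g hg1 hg2 using hg
  have hgc : ⇑π ∘ g = ⇑c := funext fun j => hg1 j
  have hπx : π x = 0 := by
    rw [← LinearMap.mem_ker, hker]; exact Submodule.mem_span_singleton_self _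
  have hli : LinearIndependent ℤ (Sum.elim (fun _ : Unit => x) g) := by
    have h1 : LinearIndependent ℤ (fun _ : Unit => x) := by
      rw [linearIndependent_iff]
      intro l hl
      rw [Finsupp.linearCombination_unique] at hl
      have h0 : l default = 0 := by
        have hm : l default ∈ LinearMap.ker (LinearMap.toSpanSingleton ℤ M x) := by
          rw [LinearMap.mem_ker, LinearMap.toSpanSingleton_apply]
          exact hl
        rw [hfree] at hm
        simpa using hm
      refine Finsupp.ext fun i => ?_
      rw [Subsingleton.elim i default, h0]
      simp
    have h2 : LinearIndependent ℤ g :=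
      LinearIndependent.of_comp π (by rw [hgc]; exact c.linearIndependent)
    refine h1.sum_type h2 ?_
    rw [Set.range_const, Submodule.disjoint_def]
    intro y hy1 hy2
    obtain ⟨k, hk⟩ := Submodule.mem_span_singleton.mp hy1
    obtain ⟨l, hl⟩ := Finsupp.mem_span_range_iff_exists_finsupp.mp hy2
    have hπy : π y = 0 := LinearMap.mem_ker.mp (by rw [hker]; exact hy1)
    have h0 : (Finsupp.linearCombination ℤ ⇑c) l = 0 := by
      rw [Finsupp.linearCombination_apply, ← hπy, ← hl, map_finsuppSum]
      simp only [LinearMap.map_smul, hg1]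
    have hl0 : l = 0 := linearIndependent_iff.mp c.linearIndependent l h0
    rw [← hl, hl0, Finsupp.sum_zero_index]
  have hsp : ⊤ ≤ Submodule.span ℤ (Set.range (Sum.elim (fun _ : Unit => x) g)) := by
    set P := Submodule.span ℤ (Set.range (Sum.elim (fun _ : Unit => x) g)) with hP
    intro m _
    have hmq : π m ∈ Submodule.span ℤ (Set.range c) := by rw [c.span_eq]; trivial
    obtain ⟨l, hl⟩ := Finsupp.mem_span_range_iff_exists_finsupp.mp hmq
    set m' : M := Finsupp.linearCombination ℤ g l with hm'
    have hq : π m' = π m := by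
      rw [hm', Finsupp.apply_linearCombination, hgc, Finsupp.linearCombination_apply]
      exact hl
    have hmem : m - m' ∈ Submodule.span ℤ {x} := by
      rw [← hker, LinearMap.mem_ker, map_sub, hq, sub_self]
    obtain ⟨k, hk⟩ := Submodule.mem_span_singleton.mp hmem
    have hx_mem : x ∈ P := Submodule.subset_span ⟨Sum.inl (), rfl⟩
    have hm'_mem : m' ∈ P := by
      rw [hm', Finsupp.linearCombination_apply]
      apply Submodule.finsuppSum_mem
      intro j _
      exact Submodule.smul_mem _ _ (Submodule.subset_span ⟨Sum.inr j, rfl⟩)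
    have hsub : m - m' ∈ P := by rw [← hk]; exact Submodule.smul_mem _ _ hx_mem
    have := P.add_mem hsub hm'_mem
    simpa using this
  refine ⟨Unit ⊕ ι, Module.Basis.mk hli hsp, ?_⟩
  intro y hy'
  rcases Set.mem_insert_iff.mp hy' with rfl | hy
  · exact ⟨Sum.inl (), by simp [Module.Basis.mk_apply]⟩
  · have hmem : π y ∈ π '' s := ⟨y, hy, rfl⟩
    obtain ⟨j, hj⟩ := hc hmem
    have hgj : g j ∈ s := hg2 j (by rw [hj]; exact hmem)
    have hgy : g j = y := hinj hgj hy (by rw [hg1, hj])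
    exact ⟨Sum.inr j, by rw [Module.Basis.mk_apply]; exact hgy⟩

end Abstract

/-- Let `lam` be a complete characteristic map on `wed_v(K)` (with `K` a fan-like
simplicial sphere and `{lam v₁, lam v₂}` unimodular).  Then `lam` is non-singular if and
only if both projections `proj_{v₁} lam` and `proj_{v₂} lam` — the induced maps on
`link {v₁}` and `link {v₂}` with values in the quotient lattices `ℤ^{n+1}/⟨lam vⱼ⟩` —
are non-singular. -/
theorem charMap_wedge_nonsingular_iff_projections [Fintype V] [DecidableEq V] (n : ℕ)
    (K : Set (Finset V)) (hK : IsComplex K) (v : V) (hv : ({v} : Finset V) ∈ K)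
    (hfan : FanLike K n)
    (lam : (V ⊕ Unit) → (Fin (n + 1) → ℤ))
    (hchar : IsCharMapInt (wedgeAt K v) lam)
    (huni : IsUnimodularSet {lam (Sum.inl v), lam (Sum.inr ())}) :
    NonSingularInt (wedgeAt K v) lam ↔
      ((∀ σ ∈ linkOf (wedgeAt K v) (Sum.inl v),
          IsUnimodularSet
            ((fun w => (Submodule.span ℤ {lam (Sum.inl v)}).mkQ (lam w)) '' ↑σ)) ∧
       (∀ σ ∈ linkOf (wedgeAt K v) (Sum.inr ()),
          IsUnimodularSet
            ((fun w => (Submodule.span ℤ {lam (Sum.inr ())}).mkQ (lam w)) '' ↑σ))) := by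
    classical
  -- lam is injective on faces
  have hinjface : ∀ τ ∈ wedgeAt K v, ∀ w₁ ∈ τ, ∀ w₂ ∈ τ, lam w₁ = lam w₂ → w₁ = w₂ := by
    intro τ hτ w₁ h₁ w₂ h₂ heq
    have hli := hchar τ hτ
    have h := hli.injective (a₁ := ⟨w₁, h₁⟩) (a₂ := ⟨w₂, h₂⟩)
      (funext fun j => by exact_mod_cast congrFun heq j)
    exact congrArg Subtype.val h
  -- no 3-term relation among the vectors of a face
  have hli3 : ∀ τ ∈ wedgeAt K v, ∀ u w₁ w₂ : V ⊕ Unit, u ∈ τ → w₁ ∈ τ → w₂ ∈ τ →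
      w₁ ≠ w₂ → w₁ ≠ u → w₂ ≠ u → ∀ k : ℤ,
      (∀ j, lam w₁ j - lam w₂ j = k * lam u j) → False := by
    intro τ hτ u w₁ w₂ hu h₁ h₂ h12 h1u h2u k hrel
    have hli := hchar τ hτ
    have h2u' : (⟨w₂, h₂⟩ : {x // x ∈ τ}) ≠ ⟨u, hu⟩ := by simp [Subtype.ext_iff, h2u]
    have h12' : (⟨w₁, h₁⟩ : {x // x ∈ τ}) ≠ ⟨w₂, h₂⟩ := by simp [Subtype.ext_iff, h12]
    have h1u' : (⟨w₁, h₁⟩ : {x // x ∈ τ}) ≠ ⟨u, hu⟩ := by simp [Subtype.ext_iff, h1u]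
    have key := linearIndependent_iff'.mp hli
      ({⟨w₁, h₁⟩, ⟨w₂, h₂⟩, ⟨u, hu⟩} : Finset {x // x ∈ τ})
      (fun w => if w.1 = w₁ then 1 else if w.1 = w₂ then -1 else -(k : ℝ)) ?_
      ⟨w₁, h₁⟩ (by simp)
    · simp at key
    · rw [Finset.sum_insert (by simp [h12', h1u']),
        Finset.sum_insert (by simp [h2u']), Finset.sum_singleton]
      have e1 : (if w₁ = w₁ then (1:ℝ) else if w₁ = w₂ then -1 else -(k : ℝ)) = 1 := by simp
      have e2 : (if w₂ = w₁ then (1:ℝ) else if w₂ = w₂ then -1 else -(k : ℝ)) = -1 := by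
        simp [Ne.symm h12]
      have e3 : (if u = w₁ then (1:ℝ) else if u = w₂ then -1 else -(k : ℝ)) = -(k : ℝ) := by
        simp [Ne.symm h1u, Ne.symm h2u]
      beta_reduce
      rw [e1, e2, e3]
      funext j
      have hj := hrel j
      have hjr : (lam w₁ j : ℝ) - (lam w₂ j : ℝ) = (k : ℝ) * (lam u j : ℝ) := by
        exact_mod_cast hj
      simp only [Pi.add_apply, Pi.smul_apply, Pi.zero_apply, smul_eq_mul]
      linarith [hjr]
  -- injectivity of projections on the link images
  have hinjQ : ∀ u : V ⊕ Unit, ∀ σ ∈ linkOf (wedgeAt K v) u,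
      Set.InjOn ((Submodule.span ℤ {lam u}).mkQ) (lam '' ↑σ) := by
    intro u σ hσ y₁ hy₁ y₂ hy₂ hq
    obtain ⟨hu_notin, hins⟩ := hσ
    obtain ⟨w₁, hw₁, rfl⟩ := hy₁
    obtain ⟨w₂, hw₂, rfl⟩ := hy₂
    by_cases h12 : w₁ = w₂
    · rw [h12]
    · exfalso
      have hmem : lam w₁ - lam w₂ ∈ Submodule.span ℤ {lam u} := by
        rw [← Submodule.ker_mkQ (Submodule.span ℤ {lam u}), LinearMap.mem_ker, map_sub,
          hq, sub_self]
      obtain ⟨k, hk⟩ := Submodule.mem_span_singleton.mp hmem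
      refine hli3 _ hins u w₁ w₂ (Finset.mem_insert_self _ _)
        (Finset.mem_insert_of_mem hw₁) (Finset.mem_insert_of_mem hw₂) h12
        (fun h => hu_notin (h ▸ hw₁)) (fun h => hu_notin (h ▸ hw₂)) k (fun j => ?_)
      have := congrFun hk j
      simpa using this.symm
  -- nonzero
  have hlam_ne : lam (Sum.inl v) ≠ 0 ∧ lam (Sum.inr ()) ≠ 0 := by
    obtain ⟨ι, b, hb⟩ := huni
    constructor
    · obtain ⟨i, hi⟩ := hb (Set.mem_insert _ _)
      rw [← hi]; exact b.ne_zero i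
    · obtain ⟨i, hi⟩ := hb (Set.mem_insert_of_mem _ rfl)
      rw [← hi]; exact b.ne_zero i
  -- torsion-freeness hypothesis for unimod_insert
  have hfree : ∀ u : V ⊕ Unit, lam u ≠ 0 →
      LinearMap.ker (LinearMap.toSpanSingleton ℤ (Fin (n+1) → ℤ) (lam u)) = ⊥ := by
    intro u hu
    rw [LinearMap.ker_eq_bot']
    intro k hk
    rw [LinearMap.toSpanSingleton_apply] at hk
    by_contra hk0
    apply hu
    funext j
    have := congrFun hk j
    simp only [Pi.smul_apply, smul_eq_mul, Pi.zero_apply] at this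
    rcases mul_eq_zero.mp this with h | h
    · exact absurd h hk0
    · exact h
  -- forward: nonsingular implies projections unimodular
  have fwd : ∀ (u : V ⊕ Unit), NonSingularInt (wedgeAt K v) lam →
      ∀ σ ∈ linkOf (wedgeAt K v) u,
        IsUnimodularSet ((fun w => (Submodule.span ℤ {lam u}).mkQ (lam w)) '' ↑σ) := by
    intro u hns σ hσ
    obtain ⟨huσ, hins⟩ := hσ
    have h1 : IsUnimodularSet (lam '' ↑(insert u σ)) := hns _ hins
    rw [Finset.coe_insert, Set.image_insert_eq] at h1
    have hxnotin : lam u ∉ lam '' ↑σ := by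
      rintro ⟨w, hw, heq⟩
      have hwu := hinjface _ hins w (Finset.mem_insert_of_mem hw) u
        (Finset.mem_insert_self u σ) heq
      exact huσ (hwu ▸ hw)
    have := unimod_proj ((Submodule.span ℤ {lam u}).mkQ)
      (Submodule.mkQ_surjective _) (Submodule.ker_mkQ _) h1 hxnotin
    rwa [Set.image_image] at this
  -- backward, per vertex
  have bwd : ∀ (u : V ⊕ Unit), lam u ≠ 0 →
      (∀ σ ∈ linkOf (wedgeAt K v) u,
        IsUnimodularSet ((fun w => (Submodule.span ℤ {lam u}).mkQ (lam w)) '' ↑σ)) →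
      ∀ τ ∈ wedgeAt K v, u ∈ τ → IsUnimodularSet (lam '' ↑τ) := by
    intro u hu0 hproj τ hτ huτ
    have hlink : τ.erase u ∈ linkOf (wedgeAt K v) u :=
      ⟨Finset.notMem_erase _ _, by rw [Finset.insert_erase huτ]; exact hτ⟩
    have h1 := hproj _ hlink
    rw [← Set.image_image] at h1
    have h2 := unimod_insert ((Submodule.span ℤ {lam u}).mkQ) (hfree u hu0)
      (Submodule.mkQ_surjective _) (Submodule.ker_mkQ _) h1 (hinjQ u _ hlink)
    have himg : lam '' ↑τ = insert (lam u) (lam '' ↑(τ.erase u)) := by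
      conv_lhs => rw [← Finset.insert_erase huτ]
      rw [Finset.coe_insert, Set.image_insert_eq]
    rwa [himg]
  -- extending a face missing both wedge vertices
  have hF3 : ∀ τ ∈ wedgeAt K v, Sum.inl v ∉ τ → Sum.inr () ∉ τ →
      insert (Sum.inl v) τ ∈ wedgeAt K v := by
    intro τ hτ h1 h2
    obtain ⟨s, σ, hs, rfl, hσ⟩ := hτ
    have hs0 : s = ∅ := by
      rw [Finset.eq_empty_iff_forall_notMem]
      intro a ha
      have hmem := hs ha
      rw [Finset.mem_insert, Finset.mem_singleton] at hmem
      rcases hmem with rfl | rfl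
      · exact h1 (Finset.mem_union_left _ ha)
      · exact h2 (Finset.mem_union_left _ ha)
    subst hs0
    have hne : ({Sum.inl v} : Finset (V ⊕ Unit)) ≠ {Sum.inl v, Sum.inr ()} := by
      intro h
      have : (Sum.inr () : V ⊕ Unit) ∈ ({Sum.inl v} : Finset (V ⊕ Unit)) := by
        rw [h]; simp
      simp at this
    refine ⟨{Sum.inl v}, σ, ?_, ?_, ?_⟩
    · intro a ha
      rw [Finset.mem_singleton] at ha
      subst ha
      exact Finset.mem_insert_self _ _
    · rw [Finset.empty_union, Finset.insert_eq]
    · rcases hσ with h | ⟨-, h⟩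
      · exact Or.inl h
      · exact Or.inr ⟨hne, h⟩
  constructor
  · intro hns
    exact ⟨fwd _ hns, fwd _ hns⟩
  · rintro ⟨h1, h2⟩ τ hτ
    by_cases hv1 : Sum.inl v ∈ τ
    · exact bwd _ hlam_ne.1 h1 τ hτ hv1
    by_cases hv2 : Sum.inr () ∈ τ
    · exact bwd _ hlam_ne.2 h2 τ hτ hv2
    · have hτ' := hF3 τ hτ hv1 hv2
      have hbig := bwd _ hlam_ne.1 h1 _ hτ' (Finset.mem_insert_self _ _)
      refine hbig.subset' (Set.image_mono ?_)
      rw [Finset.coe_insert]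
      exact Set.subset_insert _ _
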